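/- Let M ≥ 1, q ∈ (0,1), ε ∈ {−1,1}, and F = [[0, q·I_M], [ε·q^{-1}·I_M, 0]] ∈ M_{2M}(ℂ). Then for every tracial state τ on Pol(O_F^+) and all 1 ≤ j,ℓ ≤ M one has τ(u_{j+M,ℓ}^*·u_{j+M,ℓ}) = 0. In particular, every generator u_{jk} with M+1 ≤ j ≤ 2M and 1 ≤ k ≤ M belongs to the Kac ideal J_KAC(Pol(O_F^+)). -/

import Mathlib

open scoped ComplexOrder

/-- The defining relations of `Pol(O_F⁺)`: `U` is unitary and `U·F = F·conj(U)`
(equivalently `U = F·conj(U)·F⁻¹`). -/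
def OrthRel {ι : Type} [Fintype ι] [DecidableEq ι] {A : Type} [Ring A] [Algebra ℂ A]
    [StarRing A] (F : Matrix ι ι ℂ) (u : Matrix ι ι A) : Prop :=
  u * u.conjTranspose = 1 ∧ u.conjTranspose * u = 1 ∧
    u * F.map (algebraMap ℂ A) = F.map (algebraMap ℂ A) * u.map star

/-- A presentation of the universal unital complex *-algebra `Pol(O_F⁺)`:
a unital complex *-algebra carrying a matrix of generators `u` satisfying the
defining relations, universal among all such. -/
structure PolO {ι : Type} [Fintype ι] [DecidableEq ι] (F : Matrix ι ι ℂ) where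
  carrier : Type
  [isRing : Ring carrier]
  [isAlgebra : Algebra ℂ carrier]
  [isStarRing : StarRing carrier]
  [isStarModule : StarModule ℂ carrier]
  u : Matrix ι ι carrier
  rel : OrthRel F u
  universal : ∀ (B : Type) [Ring B] [Algebra ℂ B] [StarRing B] [StarModule ℂ B]
      (v : Matrix ι ι B), OrthRel F v →
      ∃! φ : carrier →⋆ₐ[ℂ] B, ∀ j k, φ (u j k) = v j k

attribute [instance] PolO.isRing PolO.isAlgebra PolO.isStarRing PolO.isStarModule

/-- The defining relations of `Pol(U_N⁺)`: both `U` and `conj(U)` are unitary. -/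
def BiUnitary {ι : Type} [Fintype ι] [DecidableEq ι] {A : Type} [Ring A] [Algebra ℂ A]
    [StarRing A] (u : Matrix ι ι A) : Prop :=
  u * u.conjTranspose = 1 ∧ u.conjTranspose * u = 1 ∧
    u.map star * (u.map star).conjTranspose = 1 ∧ (u.map star).conjTranspose * u.map star = 1

/-- A presentation of the universal unital complex *-algebra `Pol(U_N⁺)` (`N = #ι`). -/
structure PolU (ι : Type) [Fintype ι] [DecidableEq ι] where
  carrier : Type
  [isRing : Ring carrier]
  [isAlgebra : Algebra ℂ carrier]
  [isStarRing : StarRing carrier]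
  [isStarModule : StarModule ℂ carrier]
  u : Matrix ι ι carrier
  rel : BiUnitary u
  universal : ∀ (B : Type) [Ring B] [Algebra ℂ B] [StarRing B] [StarModule ℂ B]
      (v : Matrix ι ι B), BiUnitary v →
      ∃! φ : carrier →⋆ₐ[ℂ] B, ∀ j k, φ (u j k) = v j k

attribute [instance] PolU.isRing PolU.isAlgebra PolU.isStarRing PolU.isStarModule

/-- A unital complex *-algebra is RFD if finite-dimensional *-representations
separate its points. -/
def IsRFD (A : Type) [Ring A] [Algebra ℂ A] [StarRing A] : Prop :=
  ∀ a : A, a ≠ 0 → ∃ (n : ℕ) (π : A →⋆ₐ[ℂ] Matrix (Fin n) (Fin n) ℂ), π a ≠ 0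

/-- A tracial state on a unital complex *-algebra. -/
structure TracialState (A : Type) [Ring A] [Algebra ℂ A] [StarRing A] where
  toFun : A →ₗ[ℂ] ℂ
  map_one' : toFun 1 = 1
  nonneg' : ∀ a : A, 0 ≤ toFun (star a * a)
  tracial' : ∀ a b : A, toFun (a * b) = toFun (b * a)

/-- The Kac ideal: elements killed by `τ(a^* a)` for every tracial state `τ`. -/
def kacIdeal (A : Type) [Ring A] [Algebra ℂ A] [StarRing A] : Set A :=
  {a : A | ∀ τ : TracialState A, τ.toFun (star a * a) = 0}

/-- The RFD ideal: the intersection of the kernels of all finite-dimensional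
*-representations. -/
def rfdIdeal (A : Type) [Ring A] [Algebra ℂ A] [StarRing A] : Set A :=
  {a : A | ∀ (n : ℕ) (π : A →⋆ₐ[ℂ] Matrix (Fin n) (Fin n) ℂ), π a = 0}

/-- A subset of a *-ring which is a two-sided ideal closed under the star operation. -/
def IsStarIdeal {A : Type} [Ring A] [StarRing A] (T : Set A) : Prop :=
  (0 : A) ∈ T ∧ (∀ a b, a ∈ T → b ∈ T → a + b ∈ T) ∧
    (∀ x a, a ∈ T → x * a ∈ T ∧ a * x ∈ T) ∧ (∀ a, a ∈ T → star a ∈ T)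

/-- The two-sided *-ideal generated by a set. -/
def starIdealSpan {A : Type} [Ring A] [StarRing A] (S : Set A) : Set A :=
  ⋂₀ {T : Set A | IsStarIdeal T ∧ S ⊆ T}

/-- The matrix `F = [[0, q·I_M], [ε·q⁻¹·I_M, 0]] ∈ M_{2M}(ℂ)`. -/
noncomputable def Fqe (M : ℕ) (q ε : ℝ) : Matrix (Fin (2 * M)) (Fin (2 * M)) ℂ := fun j k =>
  if (j : ℕ) + M = (k : ℕ) then (q : ℂ)
  else if (j : ℕ) = (k : ℕ) + M then ((ε * q⁻¹ : ℝ) : ℂ) else 0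

/-- The embedding of `{1,…,M}` as the first `M` indices of `{1,…,2M}`. -/
def loIdx {M : ℕ} (j : Fin M) : Fin (2 * M) := ⟨(j : ℕ), by have := j.isLt; omega⟩

/-- The embedding of `{1,…,M}` as the last `M` indices of `{1,…,2M}` (`j ↦ j + M`). -/
def hiIdx {M : ℕ} (j : Fin M) : Fin (2 * M) := ⟨(j : ℕ) + M, by have := j.isLt; omega⟩


@[simp] lemma loIdx_val {M : ℕ} (j : Fin M) : ((loIdx j : Fin (2 * M)) : ℕ) = (j : ℕ) := rfl

@[simp] lemma hiIdx_val {M : ℕ} (j : Fin M) : ((hiIdx j : Fin (2 * M)) : ℕ) = (j : ℕ) + M := rfl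

lemma fin_sum_split {M : ℕ} {β : Type*} [AddCommMonoid β] (f : Fin (2 * M) → β) :
    ∑ k, f k = (∑ j : Fin M, f (loIdx j)) + ∑ j : Fin M, f (hiIdx j) := by
  have hbij : Function.Bijective (Sum.elim (loIdx (M := M)) hiIdx) := by
    constructor
    · rintro (a | a) (b | b) h <;>
        (have h' := congrArg Fin.val h;
         simp only [Sum.elim_inl, Sum.elim_inr, loIdx_val, hiIdx_val] at h')
      · exact congrArg Sum.inl (Fin.ext h')
      · exact absurd h' (by have := a.isLt; omega)
      · exact absurd h' (by have := b.isLt; omega)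
      · exact congrArg Sum.inr (Fin.ext (by omega))
    · intro k
      by_cases h : (k : ℕ) < M
      · exact ⟨Sum.inl ⟨k, h⟩, Fin.ext rfl⟩
      · exact ⟨Sum.inr ⟨(k : ℕ) - M, by have := k.isLt; omega⟩,
          Fin.ext (by have := k.isLt; simp only [Sum.elim_inr, hiIdx_val]; omega)⟩
  rw [← Fintype.sum_bijective _ hbij (fun s => f (Sum.elim loIdx hiIdx s)) f (fun _ => rfl),
    Fintype.sum_sum_type]
  rfl

/-- in `Pol(O_F⁺)` for `F = [[0, q·I_M], [ε·q⁻¹·I_M, 0]]`, every tracial state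
kills `u_{j+M,ℓ}^* u_{j+M,ℓ}` (`1 ≤ j,ℓ ≤ M`); in particular every generator `u_{jk}` with
`M+1 ≤ j ≤ 2M`, `1 ≤ k ≤ M` lies in the Kac ideal. -/
theorem polO_one_block_lower_left_in_kac (M : ℕ) (hM : 1 ≤ M) (q ε : ℝ)
    (hq0 : 0 < q) (hq1 : q < 1) (hε : ε = 1 ∨ ε = -1) (P : PolO (Fqe M q ε)) :
    (∀ (τ : TracialState P.carrier) (j l : Fin M),
        τ.toFun (star (P.u (hiIdx j) (loIdx l)) * P.u (hiIdx j) (loIdx l)) = 0) ∧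
      ∀ j k : Fin (2 * M), M ≤ (j : ℕ) → (k : ℕ) < M → P.u j k ∈ kacIdeal P.carrier := by
  classical
  obtain ⟨hUU, hUtU, hrel⟩ := P.rel
  set u := P.u with hu
  set Fm := (Fqe M q ε).map (algebraMap ℂ P.carrier) with hFm
  set s : ℂ := ((ε * q⁻¹ : ℝ) : ℂ) with hs
  have hq0' : (q : ℂ) ≠ 0 := by exact_mod_cast hq0.ne'
  have hεR : ε ≠ 0 := by rcases hε with h | h <;> rw [h] <;> norm_num
  have hsne : s ≠ 0 := by
    simp only [hs, ne_eq, Complex.ofReal_eq_zero]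
    exact mul_ne_zero hεR (inv_ne_zero hq0.ne')
  -- entry computations
  have hFlo : ∀ (j : Fin (2 * M)) (k : Fin M),
      (u * Fm) j (loIdx k) = s • u j (hiIdx k) := by
    intro j k
    rw [Matrix.mul_apply]
    have hsum : ∑ p, u j p * Fm p (loIdx k) = u j (hiIdx k) * Fm (hiIdx k) (loIdx k) := by
      refine Finset.sum_eq_single_of_mem _ (Finset.mem_univ _) ?_
      intro p _ hp
      have hk := k.isLt
      have hp' : ¬ ((p : ℕ) = (k : ℕ) + M) := fun hc => hp (Fin.ext (by simpa using hc))
      have hF : Fqe M q ε p (loIdx k) = 0 := by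
        simp only [Fqe, loIdx_val]
        simp only [show ¬ ((p : ℕ) + M = (k : ℕ)) by omega, hp', if_false]
      rw [hFm, Matrix.map_apply, hF, map_zero, mul_zero]
    rw [hsum]
    have hk := k.isLt
    have hF : Fqe M q ε (hiIdx k) (loIdx k) = ((ε * q⁻¹ : ℝ) : ℂ) := by
      simp only [Fqe, hiIdx_val, loIdx_val]
      rw [if_neg (by omega), if_pos trivial]
    rw [hFm, Matrix.map_apply, hF, ← Algebra.commutes, ← Algebra.smul_def, hs]
  have hFhi : ∀ (j : Fin (2 * M)) (k : Fin M),
      (u * Fm) j (hiIdx k) = (q : ℂ) • u j (loIdx k) := by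
    intro j k
    rw [Matrix.mul_apply]
    have hsum : ∑ p, u j p * Fm p (hiIdx k) = u j (loIdx k) * Fm (loIdx k) (hiIdx k) := by
      refine Finset.sum_eq_single_of_mem _ (Finset.mem_univ _) ?_
      intro p _ hp
      have hk := k.isLt
      have hpl := p.isLt
      have hp' : ¬ ((p : ℕ) + M = (k : ℕ) + M) := fun hc => hp (Fin.ext (by simpa using hc))
      have hF : Fqe M q ε p (hiIdx k) = 0 := by
        simp only [Fqe, hiIdx_val]
        simp only [hp', show ¬ ((p : ℕ) = (k : ℕ) + M + M) by omega, if_false]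
      rw [hFm, Matrix.map_apply, hF, map_zero, mul_zero]
    rw [hsum]
    have hk := k.isLt
    have hF : Fqe M q ε (loIdx k) (hiIdx k) = (q : ℂ) := by
      simp only [Fqe, loIdx_val, hiIdx_val]
      rw [if_pos trivial]
    rw [hFm, Matrix.map_apply, hF, ← Algebra.commutes, ← Algebra.smul_def]
  have hGlo : ∀ (j : Fin M) (k : Fin (2 * M)),
      (Fm * u.map star) (loIdx j) k = (q : ℂ) • star (u (hiIdx j) k) := by
    intro j k
    rw [Matrix.mul_apply]
    have hsum : ∑ p, Fm (loIdx j) p * (u.map star) p k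
        = Fm (loIdx j) (hiIdx j) * (u.map star) (hiIdx j) k := by
      refine Finset.sum_eq_single_of_mem _ (Finset.mem_univ _) ?_
      intro p _ hp
      have hj := j.isLt
      have hp' : ¬ ((j : ℕ) + M = (p : ℕ)) := fun hc => hp (Fin.ext (by simpa using hc.symm))
      have hF : Fqe M q ε (loIdx j) p = 0 := by
        simp only [Fqe, loIdx_val]
        simp only [hp', show ¬ ((j : ℕ) = (p : ℕ) + M) by omega, if_false]
      rw [hFm, Matrix.map_apply, hF, map_zero, zero_mul]
    rw [hsum]
    have hj := j.isLt
    have hF : Fqe M q ε (loIdx j) (hiIdx j) = (q : ℂ) := by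
      simp only [Fqe, loIdx_val, hiIdx_val]
      rw [if_pos trivial]
    rw [hFm, Matrix.map_apply, hF, Matrix.map_apply, ← Algebra.smul_def]
  -- the two relations
  have R1 : ∀ j ℓ : Fin M,
      s • u (loIdx j) (hiIdx ℓ) = (q : ℂ) • star (u (hiIdx j) (loIdx ℓ)) := by
    intro j ℓ
    have h := congrFun (congrFun hrel (loIdx j)) (loIdx ℓ)
    rw [hFlo, hGlo] at h
    exact h
  have R2 : ∀ j ℓ : Fin M,
      (q : ℂ) • u (loIdx j) (loIdx ℓ) = (q : ℂ) • star (u (hiIdx j) (hiIdx ℓ)) := by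
    intro j ℓ
    have h := congrFun (congrFun hrel (loIdx j)) (hiIdx ℓ)
    rw [hFhi, hGlo] at h
    exact h
  have hd : ∀ j ℓ : Fin M, u (hiIdx j) (hiIdx ℓ) = star (u (loIdx j) (loIdx ℓ)) := by
    intro j ℓ
    have h := congrArg (fun x => (q : ℂ)⁻¹ • x) (R2 j ℓ)
    simp only [inv_smul_smul₀ hq0'] at h
    rw [h, star_star]
  have hb : ∀ j ℓ : Fin M,
      u (loIdx j) (hiIdx ℓ) = (s⁻¹ * (q : ℂ)) • star (u (hiIdx j) (loIdx ℓ)) := by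
    intro j ℓ
    rw [← inv_smul_smul₀ hsne (u (loIdx j) (hiIdx ℓ)), R1 j ℓ, smul_smul]
  have hss : s * s = ((q : ℂ) ^ 2)⁻¹ := by
    have hε2 : ε * ε = 1 := by rcases hε with h | h <;> rw [h] <;> norm_num
    have hR : (ε * q⁻¹) * (ε * q⁻¹) = (q ^ 2)⁻¹ := by
      calc (ε * q⁻¹) * (ε * q⁻¹) = (ε * ε) * (q⁻¹ * q⁻¹) := by ring
      _ = (q ^ 2)⁻¹ := by rw [hε2, one_mul, ← mul_inv, sq]
    have hε2' : (ε : ℂ) ^ 2 = 1 := by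
      have h2 : ε ^ 2 = 1 := by rw [sq]; exact hε2
      exact_mod_cast congrArg (fun x : ℝ => (x : ℂ)) h2
    rw [hs]
    push_cast [← hR]
    linear_combination ((q : ℂ)⁻¹ * (q : ℂ)⁻¹) * hε2'
  have hscal : (s⁻¹ * (q : ℂ)) * star (s⁻¹ * (q : ℂ)) = (q : ℂ) ^ 4 := by
    have h1 : star (s⁻¹ * (q : ℂ)) = s⁻¹ * (q : ℂ) := by
      simp [hs, Complex.star_def, map_mul, map_inv₀, Complex.conj_ofReal]
    rw [h1]
    calc (s⁻¹ * (q : ℂ)) * (s⁻¹ * (q : ℂ)) = (s * s)⁻¹ * (q : ℂ) ^ 2 := by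
          rw [mul_inv]; ring
      _ = (q : ℂ) ^ 4 := by rw [hss, inv_inv]; ring
  have hbb : ∀ j ℓ : Fin M,
      u (loIdx j) (hiIdx ℓ) * star (u (loIdx j) (hiIdx ℓ))
        = ((q : ℂ) ^ 4) • (star (u (hiIdx j) (loIdx ℓ)) * u (hiIdx j) (loIdx ℓ)) := by
    intro j ℓ
    rw [hb j ℓ, star_smul, star_star, smul_mul_assoc, mul_smul_comm, smul_smul, hscal]
  have hrow : ∀ r : Fin (2 * M), ∑ k, u r k * star (u r k) = (1 : P.carrier) := by
    intro r
    have h := congrFun (congrFun hUU r) r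
    simpa [Matrix.mul_apply, Matrix.conjTranspose_apply, Matrix.one_apply_eq] using h
  -- main tracial-state computation
  have main : ∀ (τ : TracialState P.carrier) (j l : Fin M),
      τ.toFun (star (u (hiIdx j) (loIdx l)) * u (hiIdx j) (loIdx l)) = 0 := by
    intro τ
    set Sa : ℂ := ∑ j : Fin M, ∑ ℓ : Fin M,
      τ.toFun (star (u (hiIdx j) (loIdx ℓ)) * u (hiIdx j) (loIdx ℓ)) with hSa
    set Sc : ℂ := ∑ j : Fin M, ∑ ℓ : Fin M,
      τ.toFun (star (u (loIdx j) (loIdx ℓ)) * u (loIdx j) (loIdx ℓ)) with hSc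
    have E1 : ∀ j : Fin M,
        (∑ ℓ : Fin M, τ.toFun (u (hiIdx j) (loIdx ℓ) * star (u (hiIdx j) (loIdx ℓ))))
          + ∑ ℓ : Fin M, τ.toFun (star (u (loIdx j) (loIdx ℓ)) * u (loIdx j) (loIdx ℓ)) = 1 := by
      intro j
      have h := hrow (hiIdx j)
      rw [fin_sum_split] at h
      have h2 := congrArg τ.toFun h
      rw [map_add, map_sum, map_sum, τ.map_one'] at h2
      have h3 : ∀ ℓ : Fin M, τ.toFun (u (hiIdx j) (hiIdx ℓ) * star (u (hiIdx j) (hiIdx ℓ)))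
          = τ.toFun (star (u (loIdx j) (loIdx ℓ)) * u (loIdx j) (loIdx ℓ)) := by
        intro ℓ; rw [hd j ℓ, star_star]
      rw [Finset.sum_congr rfl (fun ℓ _ => h3 ℓ)] at h2
      exact h2
    have E2 : ∀ j : Fin M,
        (∑ ℓ : Fin M, τ.toFun (u (loIdx j) (loIdx ℓ) * star (u (loIdx j) (loIdx ℓ))))
          + (q : ℂ) ^ 4 * ∑ ℓ : Fin M,
              τ.toFun (star (u (hiIdx j) (loIdx ℓ)) * u (hiIdx j) (loIdx ℓ)) = 1 := by
      intro j
      have h := hrow (loIdx j)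
      rw [fin_sum_split] at h
      have h2 := congrArg τ.toFun h
      rw [map_add, map_sum, map_sum, τ.map_one'] at h2
      have h3 : ∀ ℓ : Fin M, τ.toFun (u (loIdx j) (hiIdx ℓ) * star (u (loIdx j) (hiIdx ℓ)))
          = (q : ℂ) ^ 4 * τ.toFun (star (u (hiIdx j) (loIdx ℓ)) * u (hiIdx j) (loIdx ℓ)) := by
        intro ℓ; rw [hbb j ℓ, map_smul, smul_eq_mul]
      rw [Finset.sum_congr rfl (fun ℓ _ => h3 ℓ), ← Finset.mul_sum] at h2
      exact h2
    have hsum1 : Sa + Sc = (M : ℂ) := by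
      have h := Finset.sum_congr rfl (fun (j : Fin M) (_ : j ∈ Finset.univ) => E1 j)
      rw [Finset.sum_add_distrib] at h
      simp only [Finset.sum_const, Finset.card_univ, Fintype.card_fin, nsmul_eq_mul,
        mul_one] at h
      have htr : ∑ j : Fin M, ∑ ℓ : Fin M,
          τ.toFun (u (hiIdx j) (loIdx ℓ) * star (u (hiIdx j) (loIdx ℓ))) = Sa := by
        refine Finset.sum_congr rfl fun j _ => Finset.sum_congr rfl fun ℓ _ => ?_
        exact τ.tracial' _ _
      rw [htr] at h
      exact h
    have hsum2 : Sc + (q : ℂ) ^ 4 * Sa = (M : ℂ) := by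
      have h := Finset.sum_congr rfl (fun (j : Fin M) (_ : j ∈ Finset.univ) => E2 j)
      rw [Finset.sum_add_distrib, ← Finset.mul_sum] at h
      simp only [Finset.sum_const, Finset.card_univ, Fintype.card_fin, nsmul_eq_mul,
        mul_one] at h
      have htr : ∑ j : Fin M, ∑ ℓ : Fin M,
          τ.toFun (u (loIdx j) (loIdx ℓ) * star (u (loIdx j) (loIdx ℓ))) = Sc := by
        refine Finset.sum_congr rfl fun j _ => Finset.sum_congr rfl fun ℓ _ => ?_
        exact τ.tracial' _ _
      rw [htr] at h
      exact h
    have hq4 : (q : ℂ) ^ 4 ≠ 1 := by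
      have h4 : q ^ 4 < 1 := pow_lt_one₀ hq0.le hq1 (by norm_num)
      intro hc
      have : (q : ℝ) ^ 4 = 1 := by exact_mod_cast hc
      linarith
    have hSa0 : Sa = 0 := by
      have hz : (1 - (q : ℂ) ^ 4) * Sa = 0 := by linear_combination hsum1 - hsum2
      rcases mul_eq_zero.mp hz with h | h
      · exact absurd (by linear_combination -h) hq4
      · exact h
    intro j l
    have hnn : ∀ (j ℓ : Fin M), (0 : ℂ) ≤
        τ.toFun (star (u (hiIdx j) (loIdx ℓ)) * u (hiIdx j) (loIdx ℓ)) :=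
      fun j ℓ => τ.nonneg' _
    have hout' := (Finset.sum_eq_zero_iff_of_nonneg
      (fun (j : Fin M) (_ : j ∈ Finset.univ) =>
        Finset.sum_nonneg fun ℓ _ => hnn j ℓ)).mp hSa0
    have hin := (Finset.sum_eq_zero_iff_of_nonneg
      (fun (ℓ : Fin M) (_ : ℓ ∈ Finset.univ) => hnn j ℓ)).mp
        (hout' j (Finset.mem_univ j))
    exact hin l (Finset.mem_univ l)
  refine ⟨main, ?_⟩
  intro j k hj hk τ
  have hjlt := j.isLt
  set j' : Fin M := ⟨(j : ℕ) - M, by omega⟩ with hj'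
  have hje : hiIdx j' = j := Fin.ext (by simp only [hiIdx_val, hj']; omega)
  have hke : loIdx (⟨(k : ℕ), hk⟩ : Fin M) = k := Fin.ext rfl
  have := main τ j' ⟨(k : ℕ), hk⟩
  rw [hje, hke] at this
  exact this
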